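/- arXiv:2208.12867 — 2 statements merged into one kernel-verified Lean document; each statement's English description precedes it below -/
import Mathlib

section
/- Under the assumptions of the previous item, with additionally f(x,·) differentiable for each x and ∂_r f Lipschitz continuous in each variable uniformly in the other, the map F(φ)(x) = f(x,φ(x)) satisfies a locally Lipschitz estimate in Hölder norm: for every φ₁, φ₂ ∈ C_b^θ(H), ‖F(φ₁) - F(φ₂)‖_θ ≤ C (1 + ‖φ₁‖_θ + ‖φ₂‖_θ) ‖φ₁ - φ₂‖_θ. -/
/-- Local Lipschitz estimate in Hölder norm for the Nemytskii map
`F(φ)(x) = f(x, φ(x))`: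
`‖F(φ₁) - F(φ₂)‖_θ ≤ C (1 + ‖φ₁‖_θ + ‖φ₂‖_θ) ‖φ₁ - φ₂‖_θ`.
Here `L₁(H)` is modelled by an abstract Banach space `E`, and the `C_b^θ` norms
are expressed through the corresponding sup- and Hölder-bounds. -/
theorem stmt6 {H E : Type*} [NormedAddCommGroup H] [InnerProductSpace ℝ H] [CompleteSpace H]
    [NormedAddCommGroup E] [NormedSpace ℝ E]
    (θ : ℝ) (hθ : θ ∈ Set.Ioo (0 : ℝ) 1)
    (f f' : H → ℝ → E) (L : NNReal) (c0 : ℝ) (hc0 : 0 ≤ c0)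
    (hfx : ∀ r : ℝ, LipschitzWith L (fun x => f x r))
    (hfr : ∀ x : H, LipschitzWith L (f x))
    (hgrowth : ∀ (x : H) (r : ℝ), ‖f x r‖ ≤ c0 * (1 + |r|))
    (hderiv : ∀ (x : H) (r : ℝ), HasDerivAt (f x) (f' x r) r)
    (hf'x : ∀ r : ℝ, LipschitzWith L (fun x => f' x r))
    (hf'r : ∀ x : H, LipschitzWith L (f' x)) :
    ∃ C : ℝ, 0 < C ∧
      ∀ (φ₁ φ₂ : H → ℝ) (B1 B2 D : ℝ),
        0 ≤ B1 → 0 ≤ B2 → 0 ≤ D →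
        (∀ x, |φ₁ x| ≤ B1) → (∀ x y, |φ₁ x - φ₁ y| ≤ B1 * ‖x - y‖ ^ θ) →
        (∀ x, |φ₂ x| ≤ B2) → (∀ x y, |φ₂ x - φ₂ y| ≤ B2 * ‖x - y‖ ^ θ) →
        (∀ x, |φ₁ x - φ₂ x| ≤ D) →
        (∀ x y, |(φ₁ x - φ₂ x) - (φ₁ y - φ₂ y)| ≤ D * ‖x - y‖ ^ θ) →
        (∀ x, ‖f x (φ₁ x) - f x (φ₂ x)‖ ≤ C * (1 + B1 + B2) * D) ∧
        (∀ x y, ‖(f x (φ₁ x) - f x (φ₂ x)) - (f y (φ₁ y) - f y (φ₂ y))‖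
            ≤ C * (1 + B1 + B2) * D * ‖x - y‖ ^ θ) := by
  obtain ⟨hθ0, hθ1⟩ := hθ
  have hL : (0:ℝ) ≤ L := L.coe_nonneg
  refine ⟨3 * L + 1, by positivity, ?_⟩
  intro φ₁ φ₂ B1 B2 D hB1 hB2 hD hφ1b hφ1h hφ2b hφ2h hDb hDh
  have hE : (1:ℝ) ≤ 1 + B1 + B2 := by linarith
  -- the derivative is bounded by the Lipschitz constant
  have hf'bound : ∀ (x : H) (r : ℝ), ‖f' x r‖ ≤ L := by
    intro x r
    have h := ((hderiv x r).hasFDerivAt).le_of_lipschitz (hfr x)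
    have h2 : ‖f' x r‖ = ‖ContinuousLinearMap.smulRight (1 : ℝ →L[ℝ] ℝ) (f' x r)‖ := by
      simp [ContinuousLinearMap.norm_smulRight_apply]
    linarith [h2 ▸ h]
  constructor
  · -- sup bound
    intro x
    have h1 : ‖f x (φ₁ x) - f x (φ₂ x)‖ ≤ L * |φ₁ x - φ₂ x| := by
      have := (hfr x).dist_le_mul (φ₁ x) (φ₂ x)
      simpa [dist_eq_norm, Real.norm_eq_abs] using this
    have h2 : (L:ℝ) * |φ₁ x - φ₂ x| ≤ L * D :=
      mul_le_mul_of_nonneg_left (hDb x) hL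
    have hco : (L:ℝ) ≤ (3 * L + 1) * (1 + B1 + B2) := by
      nlinarith [mul_nonneg hL hB1, mul_nonneg hL hB2]
    have h3 : (L:ℝ) * D ≤ (3 * L + 1) * (1 + B1 + B2) * D :=
      mul_le_mul_of_nonneg_right hco hD
    linarith
  · -- Hölder bound
    intro x y
    set t : ℝ := ‖x - y‖ ^ θ with ht
    have htnn : 0 ≤ t := Real.rpow_nonneg (norm_nonneg _) θ
    -- Lipschitz-in-x estimate turned into a Hölder estimate
    have hA : ∀ u : ℝ, ‖f' x u - f' y u‖ ≤ 2 * L * t := by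
      intro u
      rcases le_or_gt ‖x - y‖ 1 with hle | hgt
      · have h1 : ‖f' x u - f' y u‖ ≤ L * ‖x - y‖ := by
          have := (hf'x u).dist_le_mul x y
          simpa [dist_eq_norm] using this
        rcases eq_or_lt_of_le (norm_nonneg (x - y)) with h0 | h0
        · have : ‖x - y‖ = 0 := h0.symm
          calc ‖f' x u - f' y u‖ ≤ L * ‖x - y‖ := h1
            _ = 0 := by rw [this]; ring
            _ ≤ 2 * L * t := by positivity
        · have h2 : ‖x - y‖ ≤ t := by
            have := Real.rpow_le_rpow_of_exponent_ge h0 hle (le_of_lt hθ1)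
            simpa [Real.rpow_one] using this
          calc ‖f' x u - f' y u‖ ≤ L * ‖x - y‖ := h1
            _ ≤ L * t := mul_le_mul_of_nonneg_left h2 hL
            _ ≤ 2 * L * t := by nlinarith
      · have h1 : ‖f' x u - f' y u‖ ≤ 2 * L := by
          have := norm_sub_le (f' x u) (f' y u)
          have hx' := hf'bound x u
          have hy' := hf'bound y u
          linarith
        have h2 : (1:ℝ) ≤ t := Real.one_le_rpow (le_of_lt hgt) (le_of_lt hθ0)
        nlinarith
    -- set up the mean value argument on [0,1]
    set a1 : ℝ := φ₁ x with ha1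
    set a2 : ℝ := φ₂ x with ha2
    set b1 : ℝ := φ₁ y with hb1
    set b2 : ℝ := φ₂ y with hb2
    set u : ℝ → ℝ := fun s => a2 + s * (a1 - a2) with hu
    set v : ℝ → ℝ := fun s => b2 + s * (b1 - b2) with hv
    set k : ℝ → E := fun s => f x (u s) - f y (v s) with hk
    set k' : ℝ → E := fun s => (a1 - a2) • f' x (u s) - (b1 - b2) • f' y (v s) with hk'
    have hud : ∀ s : ℝ, HasDerivAt u (a1 - a2) s := by
      intro s
      exact (hasDerivAt_mul_const (a1 - a2)).const_add a2 (x := s)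
    have hvd : ∀ s : ℝ, HasDerivAt v (b1 - b2) s := by
      intro s
      exact (hasDerivAt_mul_const (b1 - b2)).const_add b2 (x := s)
    have hkd : ∀ s ∈ Set.Icc (0:ℝ) 1, HasDerivWithinAt k (k' s) (Set.Icc (0:ℝ) 1) s := by
      intro s _
      have h1 : HasDerivAt (fun s => f x (u s)) ((a1 - a2) • f' x (u s)) s :=
        HasDerivAt.scomp s (hderiv x (u s)) (hud s)
      have h2 : HasDerivAt (fun s => f y (v s)) ((b1 - b2) • f' y (v s)) s :=
        HasDerivAt.scomp s (hderiv y (v s)) (hvd s)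
      exact (h1.sub h2).hasDerivWithinAt
    have hbound : ∀ s ∈ Set.Icc (0:ℝ) 1, ‖k' s‖ ≤ L * (3 + B1 + B2) * D * t := by
      intro s hs
      obtain ⟨hs0, hs1⟩ := hs
      have hsplit : k' s = (a1 - a2) • (f' x (u s) - f' y (v s))
          + ((a1 - a2) - (b1 - b2)) • f' y (v s) := by
        simp only [hk', smul_sub, sub_smul]
        abel
      have huv : |u s - v s| ≤ (B1 + B2) * t := by
        have heq : u s - v s = (1 - s) * (a2 - b2) + s * (a1 - b1) := by
          simp only [hu, hv]; ring
        have h1 : |(1 - s) * (a2 - b2)| ≤ B2 * t := by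
          rw [abs_mul, abs_of_nonneg (by linarith : (0:ℝ) ≤ 1 - s)]
          have := hφ2h x y
          calc (1 - s) * |a2 - b2| ≤ 1 * |a2 - b2| := by
                apply mul_le_mul_of_nonneg_right (by linarith) (abs_nonneg _)
            _ ≤ B2 * t := by rw [one_mul]; exact this
        have h2 : |s * (a1 - b1)| ≤ B1 * t := by
          rw [abs_mul, abs_of_nonneg hs0]
          have := hφ1h x y
          calc s * |a1 - b1| ≤ 1 * |a1 - b1| := by
                apply mul_le_mul_of_nonneg_right hs1 (abs_nonneg _)
            _ ≤ B1 * t := by rw [one_mul]; exact this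
        calc |u s - v s| ≤ |(1 - s) * (a2 - b2)| + |s * (a1 - b1)| := by
              rw [heq]; exact abs_add_le _ _
          _ ≤ B2 * t + B1 * t := add_le_add h1 h2
          _ = (B1 + B2) * t := by ring
      have hfd : ‖f' x (u s) - f' y (v s)‖ ≤ 2 * L * t + L * ((B1 + B2) * t) := by
        have h1 : ‖f' x (u s) - f' y (v s)‖
            ≤ ‖f' x (u s) - f' y (u s)‖ + ‖f' y (u s) - f' y (v s)‖ := by
          have := norm_sub_le_norm_sub_add_norm_sub (f' x (u s)) (f' y (u s)) (f' y (v s))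
          exact this
        have h2 := hA (u s)
        have h3 : ‖f' y (u s) - f' y (v s)‖ ≤ L * |u s - v s| := by
          have := (hf'r y).dist_le_mul (u s) (v s)
          simpa [dist_eq_norm, Real.norm_eq_abs] using this
        have h4 : (L:ℝ) * |u s - v s| ≤ L * ((B1 + B2) * t) :=
          mul_le_mul_of_nonneg_left huv hL
        linarith
      have hd1 : |a1 - a2| ≤ D := hDb x
      have hd2 : |(a1 - a2) - (b1 - b2)| ≤ D * t := hDh x y
      calc ‖k' s‖ ≤ ‖(a1 - a2) • (f' x (u s) - f' y (v s))‖
            + ‖((a1 - a2) - (b1 - b2)) • f' y (v s)‖ := by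
            rw [hsplit]; exact norm_add_le _ _
        _ = |a1 - a2| * ‖f' x (u s) - f' y (v s)‖
            + |(a1 - a2) - (b1 - b2)| * ‖f' y (v s)‖ := by
            rw [norm_smul, norm_smul, Real.norm_eq_abs, Real.norm_eq_abs]
        _ ≤ D * (2 * L * t + L * ((B1 + B2) * t)) + (D * t) * L := by
            apply add_le_add
            · apply mul_le_mul hd1 hfd (norm_nonneg _) hD
            · apply mul_le_mul hd2 (hf'bound y (v s)) (norm_nonneg _) (by positivity)
        _ = L * (3 + B1 + B2) * D * t := by ring
    have hmem0 : (0:ℝ) ∈ Set.Icc (0:ℝ) 1 := by norm_num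
    have hmem1 : (1:ℝ) ∈ Set.Icc (0:ℝ) 1 := by norm_num
    have hmv := Convex.norm_image_sub_le_of_norm_hasDerivWithin_le hkd hbound
      (convex_Icc 0 1) hmem0 hmem1
    have hknorm : ‖k 1 - k 0‖ ≤ L * (3 + B1 + B2) * D * t := by
      have : ‖(1:ℝ) - 0‖ = 1 := by norm_num
      rw [this, mul_one] at hmv
      exact hmv
    have hkval : k 1 - k 0 = (f x (φ₁ x) - f x (φ₂ x)) - (f y (φ₁ y) - f y (φ₂ y)) := by
      have hu1 : u 1 = a1 := by simp [hu]
      have hu0 : u 0 = a2 := by simp [hu]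
      have hv1 : v 1 = b1 := by simp [hv]
      have hv0 : v 0 = b2 := by simp [hv]
      simp only [hk, hu1, hu0, hv1, hv0, ha1, ha2, hb1, hb2]
      abel
    rw [hkval] at hknorm
    calc ‖(f x (φ₁ x) - f x (φ₂ x)) - (f y (φ₁ y) - f y (φ₂ y))‖
        ≤ L * (3 + B1 + B2) * D * t := hknorm
      _ = (L * (3 + B1 + B2)) * (D * t) := by ring
      _ ≤ ((3 * L + 1) * (1 + B1 + B2)) * (D * t) := by
          apply mul_le_mul_of_nonneg_right _ (mul_nonneg hD htnn)
          nlinarith [mul_nonneg hL hB1, mul_nonneg hL hB2]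
      _ = (3 * L + 1) * (1 + B1 + B2) * D * t := by ring
end

section
/- Let O ⊂ ℝ^d be a bounded domain, H = L²(O) with orthonormal basis {e_i} ⊂ L^∞(O), and λ_i ≥ 0 with Σ_i λ_i ‖e_i‖_{L^∞} < ∞. Let 𝔣_i : ℝ × ℝ → ℝ be functions that are Lipschitz continuous in the first variable, uniformly in the second variable and in i, with Lipschitz constant L. For x ∈ H, r ∈ ℝ define f(x,r) ∈ L(H) by [f(x,r)y](ξ) = Σ_i 𝔣_i(x(ξ), r) λ_i ⟨y, e_i⟩ e_i(ξ). Then for each fixed r the map x ↦ f(x,r) is Lipschitz from H to the trace-class operators L₁(H), with Lipschitz constant at most c·L·Σ_i λ_i ‖e_i‖_{L^∞}, uniformly in r. -/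
set_option maxHeartbeats 1000000

open MeasureTheory
open scoped RealInnerProductSpace

/-- Nuclear operators on a Hilbert space: `A x = Σ_n ⟪x, g_n⟫ h_n` with
`Σ_n ‖g_n‖‖h_n‖ < ∞`. -/
def IsNuclearOp {H : Type*} [NormedAddCommGroup H] [InnerProductSpace ℝ H]
    (A : H →L[ℝ] H) : Prop :=
  ∃ g h : ℕ → H, Summable (fun n => ‖g n‖ * ‖h n‖) ∧
    ∀ x : H, A x = ∑' n, ⟪x, g n⟫ • h n

/-- The nuclear (trace-class) norm, as the infimum over nuclear representations. -/
noncomputable def nuclearNorm {H : Type*} [NormedAddCommGroup H] [InnerProductSpace ℝ H]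
    (A : H →L[ℝ] H) : ℝ :=
  sInf { C : ℝ | ∃ g h : ℕ → H, Summable (fun n => ‖g n‖ * ‖h n‖) ∧
    (∀ x : H, A x = ∑' n, ⟪x, g n⟫ • h n) ∧ C = ∑' n, ‖g n‖ * ‖h n‖ }

/-- If an operator has a nuclear representation, its nuclear norm is at most the
corresponding sum. -/
lemma nuclearNorm_le_rep {H : Type*} [NormedAddCommGroup H] [InnerProductSpace ℝ H]
    (A : H →L[ℝ] H) (g h : ℕ → H) (hs : Summable (fun n => ‖g n‖ * ‖h n‖))
    (hrep : ∀ x : H, A x = ∑' n, ⟪x, g n⟫ • h n) :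
    nuclearNorm A ≤ ∑' n, ‖g n‖ * ‖h n‖ := by
  apply csInf_le
  · refine ⟨0, fun C hC => ?_⟩
    obtain ⟨g', h', hs', -, rfl⟩ := hC
    exact tsum_nonneg fun n => mul_nonneg (norm_nonneg _) (norm_nonneg _)
  · exact ⟨g, h, hs, hrep, rfl⟩

/-- On `H = L²(O)`, with an orthonormal system `e_i ∈ L^∞(O)`, weights `λ_i ≥ 0` with
`Σ λ_i ‖e_i‖_∞ < ∞`, and `𝔣_i` Lipschitz in the first variable uniformly in the
second variable and in `i`, the operator
`f(x,r) y = Σ_i 𝔣_i(x(·), r) λ_i ⟪y, e_i⟫ e_i(·)` is, for each fixed `r`, Lipschitz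
in `x` from `H` to the trace-class operators, with Lipschitz constant at most
`c L Σ_i λ_i ‖e_i‖_∞`.  The pointwise products `𝔣_i(x(·),r) e_i(·)` are represented
by the elements `g i x r` of `H`, and the operator `f(x,r)` by `F x r`. -/
theorem stmt13 {O : Type*} [MeasurableSpace O] (μ : Measure O)
    (e : ℕ → Lp ℝ 2 μ) (he : Orthonormal ℝ e)
    (E lam : ℕ → ℝ) (hE : ∀ i, 0 ≤ E i)
    (hesup : ∀ i, ∀ᵐ ξ ∂μ, |(e i : O → ℝ) ξ| ≤ E i)
    (hlam : ∀ i, 0 ≤ lam i) (hsum : Summable (fun i => lam i * E i))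
    (L : NNReal) (𝔣 : ℕ → ℝ → ℝ → ℝ)
    (hLip : ∀ (i : ℕ) (r : ℝ), LipschitzWith L (fun s => 𝔣 i s r))
    (g : ℕ → Lp ℝ 2 μ → ℝ → Lp ℝ 2 μ)
    (hg : ∀ (i : ℕ) (x : Lp ℝ 2 μ) (r : ℝ),
      (g i x r : O → ℝ) =ᵐ[μ] fun ξ => 𝔣 i ((x : O → ℝ) ξ) r * (e i : O → ℝ) ξ)
    (F : Lp ℝ 2 μ → ℝ → (Lp ℝ 2 μ →L[ℝ] Lp ℝ 2 μ))
    (hF : ∀ (x : Lp ℝ 2 μ) (r : ℝ) (y : Lp ℝ 2 μ),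
      F x r y = ∑' i, (lam i * ⟪y, e i⟫) • g i x r) :
    ∃ c : ℝ, 0 < c ∧ ∀ (r : ℝ) (x y : Lp ℝ 2 μ),
      nuclearNorm (F x r - F y r) ≤ c * (L : ℝ) * (∑' i, lam i * E i) * ‖x - y‖ := by
  refine ⟨1, one_pos, fun r x y => ?_⟩
  -- the "columns" and "rows" of the representation
  set hf : ℕ → Lp ℝ 2 μ := fun n => g n x r - g n y r with hhf
  set gf : ℕ → Lp ℝ 2 μ := fun n => lam n • e n with hgf
  -- Step 1: norm bound on hf
  have hnorm : ∀ i, ‖hf i‖ ≤ (L : ℝ) * E i * ‖x - y‖ := by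
    intro i
    have key : ‖hf i‖ ≤ ‖((L : ℝ) * E i) • (x - y)‖ := by
      rw [Lp.norm_def, Lp.norm_def]
      refine ENNReal.toReal_mono (Lp.eLpNorm_ne_top _) ?_
      refine eLpNorm_mono_ae ?_
      filter_upwards [Lp.coeFn_sub (g i x r) (g i y r), hg i x r, hg i y r,
        Lp.coeFn_smul ((L : ℝ) * E i) (x - y), Lp.coeFn_sub x y, hesup i] with ξ h1 h2 h3 h4 h5 h6
      have hd : |𝔣 i ((x : O → ℝ) ξ) r - 𝔣 i ((y : O → ℝ) ξ) r|
          ≤ (L : ℝ) * |(x : O → ℝ) ξ - (y : O → ℝ) ξ| := by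
        have := (hLip i r).dist_le_mul ((x : O → ℝ) ξ) ((y : O → ℝ) ξ)
        simpa [Real.dist_eq] using this
      show ‖(hf i : O → ℝ) ξ‖ ≤ ‖(((L : ℝ) * E i) • (x - y) : Lp ℝ 2 μ) ξ‖
      rw [hhf]
      simp only [Pi.sub_apply, Pi.smul_apply, smul_eq_mul, Real.norm_eq_abs] at h1 h4 h5 ⊢
      rw [h1, h2, h3, h4, h5]
      calc |𝔣 i ((x : O → ℝ) ξ) r * (e i : O → ℝ) ξ - 𝔣 i ((y : O → ℝ) ξ) r * (e i : O → ℝ) ξ|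
          = |𝔣 i ((x : O → ℝ) ξ) r - 𝔣 i ((y : O → ℝ) ξ) r| * |(e i : O → ℝ) ξ| := by
            rw [← sub_mul, abs_mul]
        _ ≤ ((L : ℝ) * |(x : O → ℝ) ξ - (y : O → ℝ) ξ|) * E i :=
            mul_le_mul hd h6 (abs_nonneg _) (mul_nonneg L.coe_nonneg (abs_nonneg _))
        _ = |(L : ℝ) * E i * ((x : O → ℝ) ξ - (y : O → ℝ) ξ)| := by
            rw [abs_mul, abs_mul, abs_of_nonneg (L.coe_nonneg), abs_of_nonneg (hE i)]
            ring
    calc ‖hf i‖ ≤ ‖((L : ℝ) * E i) • (x - y)‖ := key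
      _ = (L : ℝ) * E i * ‖x - y‖ := by
          rw [norm_smul, Real.norm_eq_abs, abs_of_nonneg (mul_nonneg L.coe_nonneg (hE i))]
  have hgfn : ∀ n, ‖gf n‖ = lam n := by
    intro n
    rw [hgf]
    rw [norm_smul, Real.norm_eq_abs, abs_of_nonneg (hlam n), he.1 n, mul_one]
  -- Step 2: summability
  have hKle : ∀ n, ‖gf n‖ * ‖hf n‖ ≤ ((L : ℝ) * ‖x - y‖) * (lam n * E n) := by
    intro n
    rw [hgfn n]
    calc lam n * ‖hf n‖ ≤ lam n * ((L : ℝ) * E n * ‖x - y‖) :=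
          mul_le_mul_of_nonneg_left (hnorm n) (hlam n)
      _ = ((L : ℝ) * ‖x - y‖) * (lam n * E n) := by ring
  have hKsum : Summable (fun n => ‖gf n‖ * ‖hf n‖) :=
    Summable.of_nonneg_of_le (fun n => mul_nonneg (norm_nonneg _) (norm_nonneg _)) hKle
      (hsum.mul_left _)
  -- Step 3: the operator `B = Σ A n` with `A n z = ⟪gf n, z⟫ • hf n`
  set A : ℕ → (Lp ℝ 2 μ →L[ℝ] Lp ℝ 2 μ) := fun n => (innerSL ℝ (gf n)).smulRight (hf n) with hA
  have hAnorm : ∀ n, ‖A n‖ ≤ ‖gf n‖ * ‖hf n‖ := by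
    intro n
    rw [hA, ContinuousLinearMap.norm_smulRight_apply, innerSL_apply_norm]
  have hAsum : Summable A :=
    Summable.of_norm (hKsum.of_nonneg_of_le (fun n => norm_nonneg _) hAnorm)
  set B : Lp ℝ 2 μ →L[ℝ] Lp ℝ 2 μ := ∑' n, A n with hB
  have hBapp : ∀ z : Lp ℝ 2 μ, B z = ∑' n, ⟪gf n, z⟫ • hf n := by
    intro z
    have := (ContinuousLinearMap.apply ℝ (Lp ℝ 2 μ) z).map_tsum hAsum
    simpa [hB, hA] using this
  -- inner products with orthonormal family
  have hinner : ∀ i j, ⟪e i, e j⟫ = if i = j then (1 : ℝ) else 0 :=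
    fun i j => orthonormal_iff_ite.mp he i j
  set T : Lp ℝ 2 μ →L[ℝ] Lp ℝ 2 μ := F x r - F y r with hT
  -- values on basis vectors
  have hFxej : ∀ (u : Lp ℝ 2 μ) (j : ℕ), F u r (e j) = lam j • g j u r := by
    intro u j
    rw [hF, tsum_eq_single j]
    · rw [real_inner_comm, hinner j j, if_pos rfl, mul_one]
    · intro i hi
      rw [real_inner_comm, hinner i j, if_neg hi, mul_zero, zero_smul]
  have hTej : ∀ j, T (e j) = B (e j) := by
    intro j
    have hBj : B (e j) = lam j • hf j := by
      rw [hBapp, tsum_eq_single j]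
      · rw [hgf, real_inner_smul_left, hinner j j, if_pos rfl, mul_one]
      · intro i hi
        rw [hgf, real_inner_smul_left, hinner i j, if_neg hi, mul_zero, zero_smul]
    rw [hBj, hT, ContinuousLinearMap.sub_apply, hFxej x j, hFxej y j, hhf, ← smul_sub]
  -- orthogonal complement of the closed span
  set K : Submodule ℝ (Lp ℝ 2 μ) := (Submodule.span ℝ (Set.range e)).topologicalClosure with hK
  have heK : ∀ i, e i ∈ K := fun i =>
    Submodule.le_topologicalClosure _ (Submodule.subset_span (Set.mem_range_self i))
  have horth : ∀ v ∈ Kᗮ, ∀ i, ⟪e i, v⟫ = 0 := by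
    intro v hv i
    exact (Submodule.mem_orthogonal K v).mp hv (e i) (heK i)
  have hTv : ∀ v ∈ Kᗮ, T v = B v := by
    intro v hv
    have hFu : ∀ u : Lp ℝ 2 μ, F u r v = 0 := by
      intro u
      rw [hF]
      have hz : (fun i => (lam i * ⟪v, e i⟫) • g i u r) = fun _ => (0 : Lp ℝ 2 μ) := by
        funext i
        rw [real_inner_comm, horth v hv i, mul_zero, zero_smul]
      rw [hz, tsum_zero]
    have hBv : B v = 0 := by
      rw [hBapp]
      have hz : (fun n => (⟪gf n, v⟫ : ℝ) • hf n) = fun _ => (0 : Lp ℝ 2 μ) := by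
        funext n
        rw [hgf, real_inner_smul_left, horth v hv n, mul_zero, zero_smul]
      rw [hz, tsum_zero]
    rw [hT, ContinuousLinearMap.sub_apply, hFu x, hFu y, sub_zero, hBv]
  -- density argument: T = B
  haveI : CompleteSpace K := (Submodule.isClosed_topologicalClosure _).completeSpace_coe
  have hdense : Dense ((Submodule.span ℝ (Set.range e) ⊔ Kᗮ : Submodule ℝ (Lp ℝ 2 μ)) :
      Set (Lp ℝ 2 μ)) := by
    refine Submodule.dense_iff_topologicalClosure_eq_top.mpr ?_
    rw [eq_top_iff, ← Submodule.sup_orthogonal_of_hasOrthogonalProjection (K := K)]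
    refine sup_le ?_ ?_
    · exact Submodule.topologicalClosure_mono le_sup_left
    · exact le_trans le_sup_right (Submodule.le_topologicalClosure _)
  have hspan : Set.EqOn T B ((Submodule.span ℝ (Set.range e) : Submodule ℝ (Lp ℝ 2 μ)) :
      Set (Lp ℝ 2 μ)) := by
    have hre : Set.EqOn T B (Set.range e) := by
      rintro _ ⟨j, rfl⟩
      exact hTej j
    exact LinearMap.eqOn_span' (f := (T : Lp ℝ 2 μ →ₗ[ℝ] Lp ℝ 2 μ))
      (g := (B : Lp ℝ 2 μ →ₗ[ℝ] Lp ℝ 2 μ)) hre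
  have hEqOn : Set.EqOn T B ((Submodule.span ℝ (Set.range e) ⊔ Kᗮ : Submodule ℝ (Lp ℝ 2 μ)) :
      Set (Lp ℝ 2 μ)) := by
    intro z hz
    obtain ⟨a, ha, b, hb, rfl⟩ := Submodule.mem_sup.mp hz
    show T (a + b) = B (a + b)
    rw [map_add, map_add, hspan ha, hTv b hb]
  have heq : ∀ z : Lp ℝ 2 μ, T z = B z := by
    have := Continuous.ext_on hdense T.continuous B.continuous hEqOn
    exact fun z => congrFun this z
  -- conclusion
  have hrep : ∀ z : Lp ℝ 2 μ, T z = ∑' n, ⟪z, gf n⟫ • hf n := by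
    intro z
    rw [heq z, hBapp]
    exact tsum_congr fun n => by rw [real_inner_comm]
  have h1 : nuclearNorm T ≤ ∑' n, ‖gf n‖ * ‖hf n‖ :=
    nuclearNorm_le_rep T gf hf hKsum hrep
  have h2 : (∑' n, ‖gf n‖ * ‖hf n‖) ≤ ((L : ℝ) * ‖x - y‖) * ∑' n, lam n * E n := by
    rw [← tsum_mul_left]
    exact Summable.tsum_le_tsum hKle hKsum ((hsum.mul_left _))
  calc nuclearNorm T ≤ ((L : ℝ) * ‖x - y‖) * ∑' n, lam n * E n := le_trans h1 h2
    _ = 1 * (L : ℝ) * (∑' i, lam i * E i) * ‖x - y‖ := by ring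
end
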